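/- Let M be a 2-generated axial algebra of Majorana type (ξ,η) over a field of characteristic not 2, admitting a flip, with axial dimension D = 2 satisfying an even relation: a_1 + a_{−1} + α a_0 = 0 for some α ∈ F. Then p_1 = a_0a_1 − η(a_0 + a_1) = 0, α(1−η) + 2η = 0, and dim M < 3. -/

import Mathlib

/-- The `α`-eigenspace of the left-multiplication operator of `a`. -/
noncomputable def esp {F M : Type*} [Field F] [NonUnitalNonAssocCommRing M]
    [Module F M] [SMulCommClass F M M] [IsScalarTower F M M] (a : M) (α : F) :
    Submodule F M :=
  Module.End.eigenspace (LinearMap.mul F M a) α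

/-- An axis of Majorana type `(ξ,η)`: a primitive idempotent with semisimple
adjoint action, eigenvalues among `{1,0,ξ,η}`, obeying the fusion rule `F(ξ,η)`. -/
structure IsMajoranaAxis {F M : Type*} [Field F] [NonUnitalNonAssocCommRing M]
    [Module F M] [SMulCommClass F M M] [IsScalarTower F M M] (ξ η : F) (a : M) :
    Prop where
  idem : a * a = a
  prim : esp a (1 : F) = Submodule.span F {a}
  decomp : esp a (1 : F) ⊔ esp a (0 : F) ⊔ esp a ξ ⊔ esp a η = ⊤
  fus00 : ∀ x ∈ esp a (0 : F), ∀ y ∈ esp a (0 : F), x * y ∈ esp a (0 : F)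
  fus10 : ∀ x ∈ esp a (1 : F), ∀ y ∈ esp a (0 : F), x * y ∈ esp a (0 : F)
  fus0ξ : ∀ x ∈ esp a (0 : F), ∀ y ∈ esp a ξ, x * y ∈ esp a ξ
  fus0η : ∀ x ∈ esp a (0 : F), ∀ y ∈ esp a η, x * y ∈ esp a η
  fus1ξ : ∀ x ∈ esp a (1 : F), ∀ y ∈ esp a ξ, x * y ∈ esp a ξ
  fus1η : ∀ x ∈ esp a (1 : F), ∀ y ∈ esp a η, x * y ∈ esp a η
  fusξξ : ∀ x ∈ esp a ξ, ∀ y ∈ esp a ξ, x * y ∈ esp a (0 : F) ⊔ esp a (1 : F)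
  fusξη : ∀ x ∈ esp a ξ, ∀ y ∈ esp a η, x * y ∈ esp a η
  fusηη : ∀ x ∈ esp a η, ∀ y ∈ esp a η,
    x * y ∈ esp a (0 : F) ⊔ esp a (1 : F) ⊔ esp a ξ

set_option maxHeartbeats 1000000 in
/-- axial dimension 2 with an even relation
`a₁ + a₋₁ + α a₀ = 0` forces `p₁ = 0`, `α(1-η) + 2η = 0` and `dim M < 3`. -/
theorem stmt8 {F M : Type*} [Field F] [NonUnitalNonAssocCommRing M]
    [Module F M] [SMulCommClass F M M] [IsScalarTower F M M]
    (hchar : (2 : F) ≠ 0) (ξ η : F)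
    (hξ0 : ξ ≠ 0) (hξ1 : ξ ≠ 1) (hη0 : η ≠ 0) (hη1 : η ≠ 1) (hξη : ξ ≠ η)
    (a : ℤ → M) (haxes : ∀ i : ℤ, IsMajoranaAxis ξ η (a i))
    (hgen : NonUnitalAlgebra.adjoin F ({a 0, a 1} : Set M) = ⊤)
    (θ τ₀ : M ≃ₗ[F] M)
    (hθm : ∀ x y : M, θ (x * y) = θ x * θ y)
    (hτm : ∀ x y : M, τ₀ (x * y) = τ₀ x * τ₀ y)
    (hθa : ∀ i : ℤ, θ (a i) = a (1 - i))
    (hτa : ∀ i : ℤ, τ₀ (a i) = a (-i))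
    (hτeven : ∀ x ∈ esp (a 0) (1 : F) ⊔ esp (a 0) (0 : F) ⊔ esp (a 0) ξ, τ₀ x = x)
    (hτodd : ∀ x ∈ esp (a 0) η, τ₀ x = -x)
    (hD : Module.rank F ↥(Submodule.span F (Set.range a)) = 2)
    (α : F) (hrel : a 1 + a (-1) + α • a 0 = 0) :
    a 0 * a 1 - η • (a 0 + a 1) = 0 ∧ α * (1 - η) + 2 * η = 0 ∧
      Module.rank F M < 3 := by
  have mem_esp : ∀ (b x : M) (μ : F), x ∈ esp b μ ↔ b * x = μ • x := by
    intro b x μ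
    rw [esp, Module.End.mem_eigenspace_iff]
    constructor <;> (intro h; simpa using h)
  have ha0 : a 0 * a 0 = a 0 := (haxes 0).idem
  have ha1 : a 1 * a 1 = a 1 := (haxes 1).idem
  have ha0e : a 0 ∈ esp (a 0) (1 : F) := (mem_esp _ _ _).mpr (by rw [ha0, one_smul])
  -- decompose a 1 with respect to a 0
  have h1top : a 1 ∈ esp (a 0) (1 : F) ⊔ esp (a 0) (0 : F) ⊔ esp (a 0) ξ ⊔ esp (a 0) η := by
    rw [(haxes 0).decomp]; trivial
  obtain ⟨v, hv, w, hw, hvw⟩ := Submodule.mem_sup.mp h1top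
  set E := esp (a 0) (1 : F) ⊔ esp (a 0) (0 : F) ⊔ esp (a 0) ξ with hE
  -- a0 * v is in E
  obtain ⟨v', hv', vξ, hvξ, hv'vξ⟩ := Submodule.mem_sup.mp hv
  obtain ⟨v1, hv1, v0, hv0, hv1v0⟩ := Submodule.mem_sup.mp hv'
  have hmulv : a 0 * v ∈ E := by
    have e1 : a 0 * v1 = (1 : F) • v1 := (mem_esp _ _ _).mp hv1
    have e0 : a 0 * v0 = (0 : F) • v0 := (mem_esp _ _ _).mp hv0
    have eξ : a 0 * vξ = ξ • vξ := (mem_esp _ _ _).mp hvξ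
    have : a 0 * v = v1 + ξ • vξ := by
      rw [← hv'vξ, ← hv1v0, mul_add, mul_add, e1, e0, eξ, one_smul, zero_smul, add_zero]
    rw [this]
    exact add_mem (Submodule.mem_sup_left (Submodule.mem_sup_left hv1))
      (Submodule.mem_sup_right (Submodule.smul_mem _ _ hvξ))
  have hww : a 0 * w = η • w := (mem_esp _ _ _).mp hw
  set p := a 0 * a 1 - η • (a 0 + a 1) with hp
  have hpE : p ∈ E := by
    have hform : p = a 0 * v - η • a 0 - η • v := by
      rw [hp, ← hvw, mul_add, hww]
      module
    rw [hform]
    have hvE : v ∈ E := hv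
    have ha0E : a 0 ∈ E := Submodule.mem_sup_left (Submodule.mem_sup_left ha0e)
    exact sub_mem (sub_mem hmulv (Submodule.smul_mem _ _ ha0E)) (Submodule.smul_mem _ _ hvE)
  have hτp : τ₀ p = p := hτeven p hpE
  -- E2 : a0 * a(-1) - η(a0 + a(-1)) = p
  have hE2 : a 0 * a (-1) - η • (a 0 + a (-1)) = a 0 * a 1 - η • (a 0 + a 1) := by
    have : τ₀ p = a 0 * a (-1) - η • (a 0 + a (-1)) := by
      rw [hp, map_sub, map_smul, map_add, hτm, hτa, hτa]
      simp
    rw [← this, hτp, hp]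
  -- multiply relation by a0
  have hmul : a 0 * a 1 + a 0 * a (-1) + α • a 0 = 0 := by
    have := congrArg (fun x => a 0 * x) hrel
    simpa [mul_add, mul_smul_comm, ha0] using this
  set c := α * (1 - η) + 2 * η with hc
  have hkey0 : (2 : F) • p + c • a 0 = 0 := by
    rw [hp, hc]
    linear_combination (norm := module) hmul - hE2 - η • hrel
  -- apply θ
  have hθ0 : θ (a 0) = a 1 := by rw [hθa]; norm_num
  have hθ1 : θ (a 1) = a 0 := by rw [hθa]; norm_num
  have hθp : θ p = p := by
    rw [hp, map_sub, map_smul, map_add, hθm, hθ0, hθ1, mul_comm, add_comm (a 1)]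
  have hkey1 : (2 : F) • p + c • a 1 = 0 := by
    have := congrArg θ hkey0
    rw [map_add, map_smul, map_smul, hθp, hθ0, map_zero] at this
    exact this
  have hca : c • (a 0 - a 1) = 0 := by
    linear_combination (norm := module) hkey0 - hkey1
  -- span of range a equals span {a0, a1}
  set S := Submodule.span F ({a 0, a 1} : Set M) with hS
  have hSσ : ∀ k : ℤ, a (k + 1) + a (k - 1) + α • a k = 0 := by
    set σ : M ≃ₗ[F] M := τ₀.trans θ with hσ
    have hσa : ∀ i : ℤ, σ (a i) = a (i + 1) := by
      intro i
      have : σ (a i) = θ (τ₀ (a i)) := rfl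
      rw [this, hτa, hθa]
      ring_nf
    have hσs : ∀ i : ℤ, σ.symm (a i) = a (i - 1) := by
      intro i
      rw [LinearEquiv.symm_apply_eq, hσa]
      ring_nf
    intro k
    induction k using Int.induction_on with
    | zero => simpa using hrel
    | succ n ih =>
        have := congrArg σ ih
        rw [map_add, map_add, map_smul, hσa, hσa, hσa, map_zero] at this
        convert this using 3 <;> ring
    | pred n ih =>
        have := congrArg σ.symm ih
        rw [map_add, map_add, map_smul, hσs, hσs, hσs, map_zero] at this
        convert this using 3 <;> ring
  have haind : ∀ i j : ℤ, i = j → a i ∈ S → a j ∈ S := fun i j h hi => h ▸ hi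
  have haS : ∀ i : ℤ, a i ∈ S := by
    have h0 : a 0 ∈ S := Submodule.subset_span (by simp)
    have h1 : a 1 ∈ S := Submodule.subset_span (by simp)
    have key : ∀ n : ℕ, a (n : ℤ) ∈ S ∧ a ((n : ℤ) + 1) ∈ S ∧
        a (-(n : ℤ)) ∈ S ∧ a (-(n : ℤ) - 1) ∈ S := by
      intro n
      induction n with
      | zero =>
          refine ⟨haind 0 _ (by norm_num) h0, haind 1 _ (by norm_num) h1,
            haind 0 _ (by norm_num) h0, ?_⟩
          have hr := hSσ 0
          have heq : a ((0:ℤ) - 1) = -(a ((0:ℤ) + 1)) - α • a 0 := by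
            linear_combination (norm := module) hr
          refine haind ((0:ℤ) - 1) _ (by norm_num) ?_
          rw [heq]
          exact sub_mem (neg_mem (haind 1 _ (by norm_num) h1)) (Submodule.smul_mem _ _ h0)
      | succ n ih =>
          obtain ⟨ih0, ih1, ih2, ih3⟩ := ih
          have up : a ((n : ℤ) + 2) ∈ S := by
            have hr := hSσ ((n : ℤ) + 1)
            have heq : a ((n : ℤ) + 1 + 1) = -(a ((n:ℤ) + 1 - 1)) - α • a ((n:ℤ) + 1) := by
              linear_combination (norm := module) hr
            refine haind ((n : ℤ) + 1 + 1) _ (by ring) ?_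
            rw [heq]
            exact sub_mem (neg_mem (haind ((n:ℤ)) _ (by ring) ih0))
              (Submodule.smul_mem _ _ ih1)
          have down : a (-(n : ℤ) - 2) ∈ S := by
            have hr := hSσ (-(n : ℤ) - 1)
            have heq : a (-(n:ℤ) - 1 - 1) = -(a (-(n:ℤ) - 1 + 1)) - α • a (-(n:ℤ) - 1) := by
              linear_combination (norm := module) hr
            refine haind (-(n : ℤ) - 1 - 1) _ (by ring) ?_
            rw [heq]
            exact sub_mem (neg_mem (haind (-(n:ℤ)) _ (by ring) ih2))
              (Submodule.smul_mem _ _ ih3)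
          exact ⟨haind ((n:ℤ) + 1) _ (by push_cast; ring) ih1,
            haind ((n:ℤ) + 2) _ (by push_cast; ring) up,
            haind (-(n:ℤ) - 1) _ (by push_cast; ring) ih3,
            haind (-(n:ℤ) - 2) _ (by push_cast; ring) down⟩
    intro i
    rcases le_or_gt 0 i with h | h
    · obtain ⟨n, rfl⟩ := Int.eq_ofNat_of_zero_le h
      exact (key n).1
    · obtain ⟨n, rfl⟩ : ∃ n : ℕ, i = -(n : ℤ) := ⟨i.natAbs, by omega⟩
      exact (key n).2.2.1
  have hspan : Submodule.span F (Set.range a) = S := by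
    apply le_antisymm
    · rw [Submodule.span_le]
      rintro x ⟨i, rfl⟩
      exact haS i
    · rw [hS, Submodule.span_le]
      rintro x hx
      rcases hx with rfl | rfl
      · exact Submodule.subset_span ⟨0, rfl⟩
      · exact Submodule.subset_span ⟨1, rfl⟩
  have hrankS : Module.rank F S = 2 := by rw [← hspan]; exact hD
  have hne : a 0 ≠ a 1 := by
    intro heq
    have : S = Submodule.span F {a 0} := by rw [hS, heq]; simp
    have hle : Module.rank F S ≤ 1 := by
      rw [this]
      refine (rank_span_le _).trans ?_
      simp
    rw [hrankS] at hle
    norm_num at hle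
  have hc0 : c = 0 := by
    rcases smul_eq_zero.mp hca with h | h
    · exact h
    · exact absurd (sub_eq_zero.mp h) hne
  have hp0 : p = 0 := by
    rw [hc0, zero_smul, add_zero] at hkey0
    rcases smul_eq_zero.mp hkey0 with h | h
    · exact absurd h hchar
    · exact h
  refine ⟨hp0, hc0, ?_⟩
  -- now show dim M ≤ 2
  have hmul01 : a 0 * a 1 = η • (a 0 + a 1) := by
    have := hp0
    rw [hp, sub_eq_zero] at this
    exact this
  have hSmul : ∀ x ∈ S, ∀ y ∈ S, x * y ∈ S := by
    intro x hx y hy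
    rw [hS, Submodule.mem_span_pair] at hx hy
    obtain ⟨cx, dx, rfl⟩ := hx
    obtain ⟨cy, dy, rfl⟩ := hy
    rw [hS, Submodule.mem_span_pair]
    refine ⟨cx * cy + η * (cx * dy + dx * cy), dx * dy + η * (cx * dy + dx * cy), ?_⟩
    have expand : (cx • a 0 + dx • a 1) * (cy • a 0 + dy • a 1)
        = (cx * cy) • (a 0 * a 0) + (cx * dy) • (a 0 * a 1)
          + (dx * cy) • (a 1 * a 0) + (dx * dy) • (a 1 * a 1) := by
      simp only [add_mul, mul_add, smul_mul_assoc, mul_smul_comm, smul_smul]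
      module
    rw [expand, ha0, ha1, mul_comm (a 1) (a 0), hmul01]
    module
  let T : NonUnitalSubalgebra F M :=
    { carrier := S
      add_mem' := fun hx hy => S.add_mem hx hy
      zero_mem' := S.zero_mem
      mul_mem' := fun hx hy => hSmul _ hx _ hy
      smul_mem' := fun r x hx => S.smul_mem r hx }
  have htop : ∀ x : M, x ∈ S := by
    intro x
    have hx : x ∈ NonUnitalAlgebra.adjoin F ({a 0, a 1} : Set M) := by
      rw [hgen]; trivial
    have hle : NonUnitalAlgebra.adjoin F ({a 0, a 1} : Set M) ≤ T := by
      apply NonUnitalAlgebra.adjoin_le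
      intro y hy
      rcases hy with rfl | rfl
      · exact Submodule.subset_span (by simp)
      · exact Submodule.subset_span (by simp)
    exact hle hx
  have hStop : S = ⊤ := by
    rw [Submodule.eq_top_iff']
    exact htop
  have : Module.rank F M = Module.rank F S := by
    rw [hStop]
    exact (rank_top F M).symm
  rw [this, hrankS]
  norm_num
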